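/- Let K be a field and n > 1. Let T_n(K) be the algebra of lower triangular n×n matrices over K and D_n(K) ⊆ T_n(K) its subalgebra of diagonal matrices. Then the minimum depth is d(D_n(K), T_n(K)) = 3. -/

import Mathlib

/-! # Depth of subring extensions (Kadison–Young)
For a unital subring `B ⊆ A`, `CC B n` realizes the `n`-fold relative tensor power
`C_n(A,B) = A ⊗_B ⋯ ⊗_B A` (with `C_0(A,B) = B`) as a quotient of the iterated
tensor power over `ℤ` by the middle `B`-balancing relations, together with its
natural left/right `A`- and `B`-actions.  Bimodule maps, the divisibility relation
`M ∣ q ⬝ N`, H-equivalence, the depth conditions and the minimum depth `d(B,A) ∈ ℕ∞`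
are then defined exactly as in the paper. -/

open TensorProduct

universe u

variable (A : Type u) [Ring A]

/-- `Tpow A n` is the `(n+1)`-fold tensor power `A ⊗ℤ ⋯ ⊗ℤ A`. -/
noncomputable def Tpow : ℕ → ModuleCat.{u} ℤ
  | 0 => ModuleCat.of ℤ A
  | n + 1 => ModuleCat.of ℤ (A ⊗[ℤ] (Tpow n : Type u))

/-- Multiplication by `a : A` on the leftmost tensor factor. -/
noncomputable def lmulT (a : A) : ∀ n, (Tpow A n : Type u) →ₗ[ℤ] (Tpow A n : Type u)
  | 0 => (LinearMap.mulLeft ℤ a : A →ₗ[ℤ] A)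
  | n + 1 => LinearMap.rTensor (Tpow A n : Type u) (LinearMap.mulLeft ℤ a)

/-- Multiplication by `a : A` on the rightmost tensor factor. -/
noncomputable def rmulT (a : A) : ∀ n, (Tpow A n : Type u) →ₗ[ℤ] (Tpow A n : Type u)
  | 0 => (LinearMap.mulRight ℤ a : A →ₗ[ℤ] A)
  | n + 1 => LinearMap.lTensor A (rmulT a n)

private theorem lmulT_succ_apply (a : A) (n : ℕ) (x : A ⊗[ℤ] (Tpow A n : Type u)) :
    lmulT A a (n+1) x = LinearMap.rTensor (Tpow A n : Type u) (LinearMap.mulLeft ℤ a) x := rfl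

private theorem rmulT_succ_apply (a : A) (n : ℕ) (x : A ⊗[ℤ] (Tpow A n : Type u)) :
    rmulT A a (n+1) x = LinearMap.lTensor A (rmulT A a n) x := rfl

private theorem auxcomm (M : Type u) [AddCommGroup M] [Module ℤ M] (a : A) (g : M →ₗ[ℤ] M)
    (x : A ⊗[ℤ] M) :
    (LinearMap.rTensor M (LinearMap.mulLeft ℤ a)) ((LinearMap.lTensor A g) x) =
    (LinearMap.lTensor A g) ((LinearMap.rTensor M (LinearMap.mulLeft ℤ a)) x) := by
  induction x using TensorProduct.induction_on with
  | zero => simp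
  | tmul c t => simp
  | add y z hy hz => simp only [map_add, hy, hz]

theorem lmulT_rmulT_comm (a b : A) : ∀ (n : ℕ) (x : (Tpow A n : Type u)),
    lmulT A a n (rmulT A b n x) = rmulT A b n (lmulT A a n x)
  | 0, x => (mul_assoc a x b).symm
  | n + 1, x => by
    show (lmulT A a (n+1)) ((rmulT A b (n+1)) x) = (rmulT A b (n+1)) ((lmulT A a (n+1)) x)
    rw [lmulT, rmulT]
    exact auxcomm A (Tpow A n : Type u) a (rmulT A b n) x

private theorem aux1 (M : Type u) [AddCommGroup M] [Module ℤ M] (a c d : A) (t s : M) :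
    LinearMap.rTensor M (LinearMap.mulLeft ℤ a) (c ⊗ₜ[ℤ] t - d ⊗ₜ[ℤ] s) =
      (a * c) ⊗ₜ[ℤ] t - (a * d) ⊗ₜ[ℤ] s := by simp

private theorem aux2 (M : Type u) [AddCommGroup M] [Module ℤ M] (g : M →ₗ[ℤ] M) (c d : A)
    (t s : M) :
    LinearMap.lTensor A g (c ⊗ₜ[ℤ] t - d ⊗ₜ[ℤ] s) = c ⊗ₜ[ℤ] (g t) - d ⊗ₜ[ℤ] (g s) := by simp

private theorem aux3 (M : Type u) [AddCommGroup M] [Module ℤ M] (a c : A) (t : M) :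
    LinearMap.rTensor M (LinearMap.mulLeft ℤ a) (c ⊗ₜ[ℤ] t) = (a * c) ⊗ₜ[ℤ] t := by simp

private theorem aux4 (M : Type u) [AddCommGroup M] [Module ℤ M] (g : M →ₗ[ℤ] M) (c : A) (t : M) :
    LinearMap.lTensor A g (c ⊗ₜ[ℤ] t) = c ⊗ₜ[ℤ] (g t) := by simp


variable {A}

/-- The `B`-balancing relations inside `Tpow A n`. -/
noncomputable def rel (B : Subring A) : ∀ n, Submodule ℤ (Tpow A n : Type u)
  | 0 => ⊥
  | n + 1 =>
      Submodule.span ℤ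
        {x : (Tpow A (n+1) : Type u) |
          (∃ (a : A) (b : B) (t : (Tpow A n : Type u)),
            x = ((a * (b : A)) ⊗ₜ[ℤ] t : A ⊗[ℤ] (Tpow A n : Type u)) -
                 a ⊗ₜ[ℤ] (lmulT A (b : A) n t)) ∨
          (∃ (a : A) (r : (Tpow A n : Type u)), r ∈ rel B n ∧
            x = (a ⊗ₜ[ℤ] r : A ⊗[ℤ] (Tpow A n : Type u)))}

theorem rel_succ (B : Subring A) (n : ℕ) :
    rel B (n+1) =
      Submodule.span ℤ
        {x : (Tpow A (n+1) : Type u) |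
          (∃ (a : A) (b : B) (t : (Tpow A n : Type u)),
            x = ((a * (b : A)) ⊗ₜ[ℤ] t : A ⊗[ℤ] (Tpow A n : Type u)) -
                 a ⊗ₜ[ℤ] (lmulT A (b : A) n t)) ∨
          (∃ (a : A) (r : (Tpow A n : Type u)), r ∈ rel B n ∧
            x = (a ⊗ₜ[ℤ] r : A ⊗[ℤ] (Tpow A n : Type u)))} := rfl

theorem rel_le_comap_lmulT (B : Subring A) (a : A) :
    ∀ n, rel B n ≤ (rel B n).comap (lmulT A a n)
  | 0 => bot_le
  | n + 1 => by
    rw [rel_succ, Submodule.span_le]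
    rintro x (⟨a', b, t, rfl⟩ | ⟨a', r, hr, rfl⟩) <;>
      refine Submodule.mem_comap.mpr ?_ <;> rw [lmulT_succ_apply]
    · rw [map_sub, LinearMap.rTensor_tmul, LinearMap.rTensor_tmul, LinearMap.mulLeft_apply,
        LinearMap.mulLeft_apply]
      refine Submodule.subset_span (Or.inl ⟨a * a', b, t, ?_⟩)
      rw [mul_assoc]
    · rw [LinearMap.rTensor_tmul, LinearMap.mulLeft_apply]
      exact Submodule.subset_span (Or.inr ⟨a * a', r, hr, rfl⟩)

theorem rel_le_comap_rmulT (B : Subring A) (a : A) :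
    ∀ n, rel B n ≤ (rel B n).comap (rmulT A a n)
  | 0 => bot_le
  | n + 1 => by
    rw [rel_succ, Submodule.span_le]
    rintro x (⟨a', b, t, rfl⟩ | ⟨a', r, hr, rfl⟩) <;>
      refine Submodule.mem_comap.mpr ?_ <;> rw [rmulT_succ_apply]
    · rw [map_sub, LinearMap.lTensor_tmul, LinearMap.lTensor_tmul, ← lmulT_rmulT_comm]
      exact Submodule.subset_span (Or.inl ⟨a', b, rmulT A a n t, rfl⟩)
    · rw [LinearMap.lTensor_tmul]
      exact Submodule.subset_span
        (Or.inr ⟨a', rmulT A a n r, rel_le_comap_rmulT B a n hr, rfl⟩)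

/-- `CC B n` is `C_n(A,B) = A ⊗_B ⋯ ⊗_B A` (`n` factors of `A`), with `CC B 0 = B`. -/
noncomputable def CC (B : Subring A) : ℕ → ModuleCat.{u} ℤ
  | 0 => ModuleCat.of ℤ B
  | n + 1 => ModuleCat.of ℤ ((Tpow A n : Type u) ⧸ rel B n)

/-- The left `A`-action on `C_{n+1}(A,B)`. -/
noncomputable def lA (B : Subring A) (a : A) (n : ℕ) :
    (CC B (n+1) : Type u) →ₗ[ℤ] (CC B (n+1) : Type u) :=
  (Submodule.mapQ _ _ (lmulT A a n) (rel_le_comap_lmulT B a n)).toAddMonoidHom.toIntLinearMap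

/-- The right `A`-action on `C_{n+1}(A,B)`. -/
noncomputable def rA (B : Subring A) (a : A) (n : ℕ) :
    (CC B (n+1) : Type u) →ₗ[ℤ] (CC B (n+1) : Type u) :=
  (Submodule.mapQ _ _ (rmulT A a n) (rel_le_comap_rmulT B a n)).toAddMonoidHom.toIntLinearMap

/-- The left `B`-action on `C_n(A,B)`. -/
noncomputable def lB (B : Subring A) (b : B) : ∀ n, (CC B n : Type u) →ₗ[ℤ] (CC B n : Type u)
  | 0 => (LinearMap.mulLeft ℤ b : B →ₗ[ℤ] B)
  | n + 1 => lA B (b : A) n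

/-- The right `B`-action on `C_n(A,B)`. -/
noncomputable def rB (B : Subring A) (b : B) : ∀ n, (CC B n : Type u) →ₗ[ℤ] (CC B n : Type u)
  | 0 => (LinearMap.mulRight ℤ b : B →ₗ[ℤ] B)
  | n + 1 => rA B (b : A) n

/-- `f` is a morphism of `B`-`B`-bimodules `C_m(A,B) → C_n(A,B)`. -/
def IsBBHom (B : Subring A) {m n : ℕ} (f : (CC B m : Type u) →ₗ[ℤ] (CC B n : Type u)) : Prop :=
  ∀ b : B, (∀ x, f (lB B b m x) = lB B b n (f x)) ∧ (∀ x, f (rB B b m x) = rB B b n (f x))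

/-- `f` is a morphism of `A`-`B`-bimodules `C_{m+1}(A,B) → C_{n+1}(A,B)`. -/
def IsABHom (B : Subring A) {m n : ℕ}
    (f : (CC B (m+1) : Type u) →ₗ[ℤ] (CC B (n+1) : Type u)) : Prop :=
  (∀ (a : A) x, f (lA B a m x) = lA B a n (f x)) ∧
  (∀ (b : B) x, f (rB B b (m+1) x) = rB B b (n+1) (f x))

/-- `f` is a morphism of `B`-`A`-bimodules `C_{m+1}(A,B) → C_{n+1}(A,B)`. -/
def IsBAHom (B : Subring A) {m n : ℕ}
    (f : (CC B (m+1) : Type u) →ₗ[ℤ] (CC B (n+1) : Type u)) : Prop :=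
  (∀ (b : B) x, f (lB B b (m+1) x) = lB B b (n+1) (f x)) ∧
  (∀ (a : A) x, f (rA B a m x) = rA B a n (f x))

/-- `C_m(A,B)` divides a multiple of `C_n(A,B)` as `B`-`B`-bimodules. -/
def DividesBB (B : Subring A) (m n : ℕ) : Prop :=
  ∃ (r : ℕ) (f : Fin r → ((CC B m : Type u) →ₗ[ℤ] (CC B n : Type u)))
    (g : Fin r → ((CC B n : Type u) →ₗ[ℤ] (CC B m : Type u))),
    (∀ i, IsBBHom B (f i)) ∧ (∀ i, IsBBHom B (g i)) ∧
      ∑ i, (g i).comp (f i) = LinearMap.id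

/-- `C_{m+1}(A,B)` divides a multiple of `C_{n+1}(A,B)` as `A`-`B`-bimodules. -/
def DividesAB (B : Subring A) (m n : ℕ) : Prop :=
  ∃ (r : ℕ) (f : Fin r → ((CC B (m+1) : Type u) →ₗ[ℤ] (CC B (n+1) : Type u)))
    (g : Fin r → ((CC B (n+1) : Type u) →ₗ[ℤ] (CC B (m+1) : Type u))),
    (∀ i, IsABHom B (f i)) ∧ (∀ i, IsABHom B (g i)) ∧
      ∑ i, (g i).comp (f i) = LinearMap.id

/-- `C_{m+1}(A,B)` divides a multiple of `C_{n+1}(A,B)` as `B`-`A`-bimodules. -/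
def DividesBA (B : Subring A) (m n : ℕ) : Prop :=
  ∃ (r : ℕ) (f : Fin r → ((CC B (m+1) : Type u) →ₗ[ℤ] (CC B (n+1) : Type u)))
    (g : Fin r → ((CC B (n+1) : Type u) →ₗ[ℤ] (CC B (m+1) : Type u))),
    (∀ i, IsBAHom B (f i)) ∧ (∀ i, IsBAHom B (g i)) ∧
      ∑ i, (g i).comp (f i) = LinearMap.id

/-- H-equivalence of `C_m` and `C_n` as `B`-`B`-bimodules. -/
def HequivBB (B : Subring A) (m n : ℕ) : Prop := DividesBB B m n ∧ DividesBB B n m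

/-- H-equivalence of `C_{m+1}` and `C_{n+1}` as `A`-`B`-bimodules. -/
def HequivAB (B : Subring A) (m n : ℕ) : Prop := DividesAB B m n ∧ DividesAB B n m

/-- H-equivalence of `C_{m+1}` and `C_{n+1}` as `B`-`A`-bimodules. -/
def HequivBA (B : Subring A) (m n : ℕ) : Prop := DividesBA B m n ∧ DividesBA B n m

/-- The extension `B ⊆ A` has depth `d`: depth `2n+1` (`n ≥ 0`) means
`C_{n+1} ∼ C_n` as `B`-`B`-bimodules, and right (resp. left) depth `2n` (`n ≥ 1`)
means `C_{n+1} ∼ C_n` as `A`-`B`- (resp. `B`-`A`-) bimodules. -/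
def HasDepth (B : Subring A) (d : ℕ) : Prop :=
  (∃ n : ℕ, d = 2 * n + 1 ∧ HequivBB B (n+1) n) ∨
  (∃ n : ℕ, d = 2 * (n+1) ∧ (HequivAB B (n+1) n ∨ HequivBA B (n+1) n))

/-- The minimum depth `d(B,A) ∈ ℕ∞` of the subring extension `B ⊆ A`. -/
noncomputable def depth (B : Subring A) : ℕ∞ :=
  sInf {d : ℕ∞ | ∃ m : ℕ, HasDepth B m ∧ d = (m : ℕ∞)}

/-- The ring `T_n(K)` of lower triangular `n × n` matrices, as a subring of the
full matrix ring. -/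
def lowerTriangularRing (n : ℕ) (K : Type u) [Field K] :
    Subring (Matrix (Fin n) (Fin n) K) where
  carrier := {x | ∀ i j : Fin n, i < j → x i j = 0}
  zero_mem' := fun i j _ => rfl
  one_mem' := fun i j h => Matrix.one_apply_ne (ne_of_lt h)
  add_mem' := fun {x y} hx hy i j h => by
    simp only [Matrix.add_apply, hx i j h, hy i j h, add_zero]
  neg_mem' := fun {x} hx i j h => by
    simp only [Matrix.neg_apply, hx i j h, neg_zero]
  mul_mem' := fun {x y} hx hy i j hij => by
    rw [Matrix.mul_apply]
    refine Finset.sum_eq_zero fun k _ => ?_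
    rcases lt_or_ge i k with h | h
    · rw [hx i k h, zero_mul]
    · rw [hy k j (lt_of_le_of_lt h hij), mul_zero]

/-- The subring `D_n(K) ⊆ T_n(K)` of diagonal matrices. -/
def diagonalSubring (n : ℕ) (K : Type u) [Field K] :
    Subring ↥(lowerTriangularRing n K) where
  carrier := {x | ∀ i j : Fin n, i ≠ j → (x : Matrix (Fin n) (Fin n) K) i j = 0}
  zero_mem' := fun i j _ => rfl
  one_mem' := fun i j h => Matrix.one_apply_ne h
  add_mem' := fun {x y} hx hy i j h => by
    show ((x : Matrix (Fin n) (Fin n) K) + y) i j = 0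
    simp only [Matrix.add_apply, hx i j h, hy i j h, add_zero]
  neg_mem' := fun {x} hx i j h => by
    show (-(x : Matrix (Fin n) (Fin n) K)) i j = 0
    simp only [Matrix.neg_apply, hx i j h, neg_zero]
  mul_mem' := fun {x y} hx hy i j hij => by
    show ((x : Matrix (Fin n) (Fin n) K) * y) i j = 0
    rw [Matrix.mul_apply]
    refine Finset.sum_eq_zero fun k _ => ?_
    rcases eq_or_ne i k with rfl | h
    · rw [hy i j hij, mul_zero]
    · rw [hx i k h, zero_mul]

section Generic
variable {A : Type u} [Ring A] (B : Subring A)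

/-- quotient map onto `C_1`. -/
noncomputable def mk1 : A →ₗ[ℤ] (CC B 1 : Type u) := Submodule.mkQ (rel B 0)

/-- quotient map onto `C_2`. -/
noncomputable def mk2 : A ⊗[ℤ] A →ₗ[ℤ] (CC B 2 : Type u) := Submodule.mkQ (rel B 1)

theorem mk1_surjective : Function.Surjective (mk1 B) := by
  intro x
  obtain ⟨a, rfl⟩ := Submodule.Quotient.mk_surjective _ x
  exact ⟨a, rfl⟩

theorem mk2_surjective : Function.Surjective (mk2 B) := by
  intro x
  obtain ⟨a, rfl⟩ := Submodule.Quotient.mk_surjective _ x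
  exact ⟨a, rfl⟩

theorem mk1_injective : Function.Injective (mk1 B) := by
  intro a a' h
  have := (Submodule.Quotient.eq (rel B 0)).mp h
  rw [show rel B 0 = ⊥ from rfl, Submodule.mem_bot] at this
  exact sub_eq_zero.mp this

theorem lA0_mk (a x : A) : lA B a 0 (mk1 B x) = mk1 B (a * x) := rfl
theorem rA0_mk (a x : A) : rA B a 0 (mk1 B x) = mk1 B (x * a) := rfl
theorem lB1_mk (b : B) (x : A) : lB B b 1 (mk1 B x) = mk1 B (↑b * x) := rfl
theorem rB1_mk (b : B) (x : A) : rB B b 1 (mk1 B x) = mk1 B (x * ↑b) := rfl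

theorem lA1_mk (a x y : A) : lA B a 1 (mk2 B (x ⊗ₜ y)) = mk2 B ((a * x) ⊗ₜ y) := rfl
theorem rA1_mk (a x y : A) : rA B a 1 (mk2 B (x ⊗ₜ y)) = mk2 B (x ⊗ₜ (y * a)) := rfl
theorem lB2_mk (b : B) (x y : A) : lB B b 2 (mk2 B (x ⊗ₜ y)) = mk2 B ((↑b * x) ⊗ₜ y) :=
  lA1_mk B _ x y
theorem rB2_mk (b : B) (x y : A) : rB B b 2 (mk2 B (x ⊗ₜ y)) = mk2 B (x ⊗ₜ (y * ↑b)) :=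
  rA1_mk B _ x y

theorem bal (x : A) (b : B) (t : A) :
    mk2 B ((x * ↑b) ⊗ₜ t) = mk2 B (x ⊗ₜ (↑b * t)) := by
  rw [show mk2 B ((x * ↑b) ⊗ₜ t) = Submodule.Quotient.mk ((x * ↑b) ⊗ₜ t) from rfl,
    show mk2 B (x ⊗ₜ (↑b * t)) = Submodule.Quotient.mk (x ⊗ₜ (↑b * t)) from rfl]
  exact (Submodule.Quotient.eq (rel B 1)).mpr (Submodule.subset_span (Or.inl ⟨x, b, t, rfl⟩))

theorem eqC1 {N : Type u} [AddCommGroup N] [Module ℤ N]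
    (f₁ f₂ : (CC B 1 : Type u) →ₗ[ℤ] N)
    (h : ∀ a : A, f₁ (mk1 B a) = f₂ (mk1 B a)) : f₁ = f₂ :=
  Submodule.linearMap_qext _ (LinearMap.ext fun a => h a)

theorem eqC2 {N : Type u} [AddCommGroup N] [Module ℤ N]
    (f₁ f₂ : (CC B 2 : Type u) →ₗ[ℤ] N)
    (h : ∀ x y : A, f₁ (mk2 B (x ⊗ₜ y)) = f₂ (mk2 B (x ⊗ₜ y))) : f₁ = f₂ :=
  Submodule.linearMap_qext _ (TensorProduct.ext' fun x y => h x y)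

end Generic

section Generic2
variable {A : Type u} [Ring A] (B : Subring A)

/-- Lift an additive bi-hom to the tensor product over `ℤ`. -/
noncomputable def liftBil {M N P : Type u} [AddCommGroup M] [AddCommGroup N] [AddCommGroup P]
    (f : M →+ N →+ P) : M ⊗[ℤ] N →ₗ[ℤ] P :=
  TensorProduct.lift (AddMonoidHom.toIntLinearMap
    { toFun := fun m => (f m).toIntLinearMap
      map_zero' := by ext x; simp
      map_add' := by intro a b; ext x; simp })

@[simp] theorem liftBil_tmul {M N P : Type u} [AddCommGroup M] [AddCommGroup N]
    [AddCommGroup P] (f : M →+ N →+ P) (m : M) (n : N) :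
    liftBil f (m ⊗ₜ n) = f m n := rfl

/-- The multiplication map `A ⊗ A → A` as a `ℤ`-bilinear hom. -/
noncomputable def mulV : A ⊗[ℤ] A →ₗ[ℤ] A :=
  liftBil { toFun := fun a => AddMonoidHom.mk' (fun a' => a * a') (by intro x y; exact mul_add a x y)
            map_zero' := by ext x; simp
            map_add' := by intro a b; ext x; exact add_mul a b x }

@[simp] theorem mulV_tmul (x y : A) : mulV (x ⊗ₜ y) = x * y := rfl

theorem mulV_ker_gen (a : A) (b : B) (t : A) :
    ((a * ↑b) ⊗ₜ[ℤ] t - a ⊗ₜ[ℤ] ((↑b : A) * t)) ∈ LinearMap.ker (mulV (A := A)) := by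
  rw [LinearMap.mem_ker, map_sub, mulV_tmul, mulV_tmul, mul_assoc, sub_self]

theorem rel_le_ker_mulV : rel B 1 ≤ LinearMap.ker (mulV (A := A)) := by
  refine Submodule.span_le.mpr ?_
  rintro x (⟨a, b, t, rfl⟩ | ⟨a, r, hr, rfl⟩)
  · exact SetLike.mem_coe.mpr (mulV_ker_gen B a b t)
  · rw [show rel B 0 = ⊥ from rfl, Submodule.mem_bot] at hr
    subst hr
    exact (show a ⊗ₜ[ℤ] (0 : A) ∈ LinearMap.ker (mulV (A := A)) by
      rw [tmul_zero]; exact Submodule.zero_mem _)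

/-- multiplication `C_2 → C_1`. -/
noncomputable def vMap : (CC B 2 : Type u) →ₗ[ℤ] (CC B 1 : Type u) :=
  Submodule.mapQ (rel B 1) (rel B 0) mulV (rel_le_ker_mulV B)

/-- `a ↦ a ⊗ 1 : C_1 → C_2`. -/
noncomputable def uMap : (CC B 1 : Type u) →ₗ[ℤ] (CC B 2 : Type u) :=
  Submodule.mapQ (rel B 0) (rel B 1) ((TensorProduct.mk ℤ A A).flip 1)
    (by rw [show rel B 0 = ⊥ from rfl]; exact bot_le)

theorem vMap_mk (x y : A) : vMap B (mk2 B (x ⊗ₜ y)) = mk1 B (x * y) := rfl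
theorem uMap_mk (a : A) : uMap B (mk1 B a) = mk2 B (a ⊗ₜ 1) := rfl

theorem isBBHom_uMap : IsBBHom B (uMap B) := by
  intro b
  constructor
  · intro x
    obtain ⟨a, rfl⟩ := mk1_surjective B x
    rw [lB1_mk, uMap_mk, uMap_mk, lB2_mk]
  · intro x
    obtain ⟨a, rfl⟩ := mk1_surjective B x
    rw [rB1_mk, uMap_mk, uMap_mk, rB2_mk, bal, mul_one, one_mul]

theorem isBBHom_vMap : IsBBHom B (vMap B) := by
  intro b
  constructor
  · intro x
    obtain ⟨z, rfl⟩ := mk2_surjective B x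
    induction z using TensorProduct.induction_on with
    | zero => simp only [map_zero]
    | tmul c t => rw [lB2_mk, vMap_mk, vMap_mk, lB1_mk, mul_assoc]
    | add y z hy hz => simp only [map_add, hy, hz]
  · intro x
    obtain ⟨z, rfl⟩ := mk2_surjective B x
    induction z using TensorProduct.induction_on with
    | zero => simp only [map_zero]
    | tmul c t => rw [rB2_mk, vMap_mk, vMap_mk, rB1_mk, mul_assoc]
    | add y z hy hz => simp only [map_add, hy, hz]

theorem dividesBB_one_two : DividesBB B 1 2 := by
  refine ⟨1, fun _ => uMap B, fun _ => vMap B, fun _ => isBBHom_uMap B,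
    fun _ => isBBHom_vMap B, ?_⟩
  rw [Finset.sum_const, Finset.card_univ, Fintype.card_fin, one_smul]
  refine eqC1 B _ _ fun a => ?_
  rw [LinearMap.comp_apply, uMap_mk, vMap_mk, mul_one, LinearMap.id_apply]

end Generic2

section MatrixToolkit
variable {K : Type u} [Field K] {n : ℕ}

theorem mem_lower {x : Matrix (Fin n) (Fin n) K} (hx : x ∈ lowerTriangularRing n K) :
    ∀ i j : Fin n, i < j → x i j = 0 := hx

theorem mem_diag {x : ↥(lowerTriangularRing n K)} (hx : x ∈ diagonalSubring n K) :
    ∀ i j : Fin n, i ≠ j → (x : Matrix (Fin n) (Fin n) K) i j = 0 := hx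

theorem stdB_apply (i j : Fin n) (k : K) (p q : Fin n) :
    Matrix.single i j k p q = if p = i ∧ q = j then k else 0 := by
  simp only [Matrix.single, Matrix.of_apply]
  rw [if_congr (show (i = p ∧ j = q) ↔ (p = i ∧ q = j) by
    constructor <;> rintro ⟨rfl, rfl⟩ <;> exact ⟨rfl, rfl⟩) rfl rfl]

/-- `stdA i j k` : the matrix unit `k·e_{ij}` (or `0` if `(i,j)` is above the diagonal),
as an element of `T_n(K)`. -/
def stdA (i j : Fin n) (k : K) : ↥(lowerTriangularRing n K) :=
  ⟨Matrix.single i j (if j ≤ i then k else 0), by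
    intro p q hpq
    rw [stdB_apply]
    split_ifs with h1 h2
    · obtain ⟨rfl, rfl⟩ := h1
      exact absurd hpq (not_lt.mpr h2)
    · rfl
    · rfl⟩

theorem stdA_apply (i j : Fin n) (k : K) (p q : Fin n) :
    (stdA i j k).1 p q = if p = i ∧ q = j ∧ j ≤ i then k else 0 := by
  show Matrix.single i j (if j ≤ i then k else 0) p q = _
  rw [stdB_apply]
  by_cases h1 : p = i <;> by_cases h2 : q = j <;> by_cases h3 : j ≤ i <;>
    simp [h1, h2, h3]

theorem stdA_add (i j : Fin n) (k k' : K) :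
    stdA i j (k + k') = stdA i j k + stdA i j k' := by
  refine Subtype.ext (Matrix.ext fun p q => ?_)
  push_cast
  rw [Matrix.add_apply, stdA_apply, stdA_apply, stdA_apply]
  split_ifs <;> simp

/-- `dA j` : the diagonal matrix unit `e_{jj}` in `T_n(K)`. -/
def dA (j : Fin n) : ↥(lowerTriangularRing n K) := stdA j j 1

theorem dA_apply (j p q : Fin n) :
    (dA (K := K) j).1 p q = if p = j ∧ q = j then 1 else 0 := by
  rw [dA, stdA_apply]
  by_cases h1 : p = j <;> by_cases h2 : q = j <;> simp [h1, h2]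

/-- `dB j` : the diagonal matrix unit `e_{jj}` in `D_n(K)`. -/
def dB (j : Fin n) : ↥(diagonalSubring n K) :=
  ⟨dA j, by
    intro p q hpq
    show (dA j).1 p q = 0
    rw [dA_apply]
    split_ifs with h1
    · exact absurd (h1.1.trans h1.2.symm) hpq
    · rfl⟩

theorem dB_val (j : Fin n) : (dB (K := K) j).1 = dA j := rfl

/-- `sB k` : the scalar matrix `k·1` in `D_n(K)`. -/
def sB (k : K) : ↥(diagonalSubring n K) :=
  ⟨⟨k • (1 : Matrix (Fin n) (Fin n) K), by
    intro p q hpq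
    rw [Matrix.smul_apply, Matrix.one_apply_ne (ne_of_lt hpq), smul_zero]⟩, by
    intro p q hpq
    show (k • (1 : Matrix (Fin n) (Fin n) K)) p q = 0
    rw [Matrix.smul_apply, Matrix.one_apply_ne hpq, smul_zero]⟩

theorem sB_apply (k : K) (p q : Fin n) :
    ((sB (n := n) k).1).1 p q = if p = q then k else 0 := by
  show (k • (1 : Matrix (Fin n) (Fin n) K)) p q = _
  rw [Matrix.smul_apply, Matrix.one_apply]
  split_ifs <;> simp

theorem low_val_mul (x y : ↥(lowerTriangularRing n K)) : (x * y).1 = x.1 * y.1 := rfl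

theorem low_val_sum {ι : Type*} {s : Finset ι} (f : ι → ↥(lowerTriangularRing n K)) :
    (∑ i ∈ s, f i).1 = ∑ i ∈ s, (f i).1 :=
  map_sum (SubringClass.subtype (lowerTriangularRing n K)) f s

theorem low_one_val : ((1 : ↥(lowerTriangularRing n K)) : Matrix (Fin n) (Fin n) K) = 1 := rfl

theorem mul_entry (x y : ↥(lowerTriangularRing n K)) (p q : Fin n) :
    (x * y).1 p q = ∑ m, x.1 p m * y.1 m q := by
  rw [low_val_mul, Matrix.mul_apply]

theorem sum_dA : (∑ j, dA j : ↥(lowerTriangularRing n K)) = 1 := by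
  refine Subtype.ext (Matrix.ext fun p q => ?_)
  rw [low_val_sum, Matrix.sum_apply, low_one_val]
  simp only [dA_apply]
  by_cases h : p = q
  · subst h
    rw [Matrix.one_apply_eq, Finset.sum_eq_single p
      (fun b _ hb => by rw [if_neg (fun hc => hb hc.1.symm)]) (by simp), if_pos ⟨rfl, rfl⟩]
  · rw [Matrix.one_apply_ne h]
    exact Finset.sum_eq_zero fun j _ => by
      rw [if_neg (fun hc => h (hc.1.trans hc.2.symm))]

theorem stdA_mul_dA (i j : Fin n) (k : K) : stdA i j k * dA j = stdA i j k := by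
  refine Subtype.ext (Matrix.ext fun p q => ?_)
  rw [mul_entry, Finset.sum_eq_single j (fun m _ hm => by
    rw [dA_apply, if_neg (fun hc => hm hc.1), mul_zero]) (by simp)]
  rw [stdA_apply, dA_apply, stdA_apply]
  by_cases h1 : p = i <;> by_cases h2 : q = j <;> by_cases h3 : j ≤ i <;>
    simp [h1, h2, h3]

theorem dA_mul_stdA (j l : Fin n) (k : K) : dA j * stdA j l k = stdA j l k := by
  refine Subtype.ext (Matrix.ext fun p q => ?_)
  rw [mul_entry, Finset.sum_eq_single j (fun m _ hm => by
    rw [dA_apply, if_neg (fun hc => hm hc.2), zero_mul]) (by simp)]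
  rw [dA_apply, stdA_apply, stdA_apply]
  by_cases h1 : p = j <;> by_cases h2 : q = l <;> by_cases h3 : l ≤ j <;>
    simp [h1, h2, h3]

theorem mulLow_dA (a : ↥(lowerTriangularRing n K)) (j : Fin n) :
    a * dA j = ∑ i, stdA i j (a.1 i j) := by
  refine Subtype.ext (Matrix.ext fun p q => ?_)
  rw [mul_entry, low_val_sum, Matrix.sum_apply]
  simp only [stdA_apply, dA_apply]
  rw [Finset.sum_eq_single j (fun m _ hm => by
    rw [if_neg (fun hc => hm hc.1), mul_zero]) (by simp)]
  rw [Finset.sum_eq_single p (fun b _ hb => by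
    rw [if_neg (fun hc => hb hc.1.symm)]) (by simp)]
  by_cases h2 : q = j <;> by_cases h3 : j ≤ p <;> simp [h2, h3]
  exact mem_lower a.2 p j (not_le.mp h3)

theorem dA_mulLow (a : ↥(lowerTriangularRing n K)) (j : Fin n) :
    dA j * a = ∑ l, stdA j l (a.1 j l) := by
  refine Subtype.ext (Matrix.ext fun p q => ?_)
  rw [mul_entry, low_val_sum, Matrix.sum_apply]
  simp only [stdA_apply, dA_apply]
  rw [Finset.sum_eq_single j (fun m _ hm => by
    rw [if_neg (fun hc => hm hc.2), zero_mul]) (by simp)]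
  rw [Finset.sum_eq_single q (fun b _ hb => by
    rw [if_neg (fun hc => hb hc.2.1.symm)]) (by simp)]
  by_cases h2 : p = j <;> by_cases h3 : q ≤ j <;> simp [h2, h3]
  exact mem_lower a.2 j q (not_le.mp h3)

theorem stdA_mul_sB (i j : Fin n) (k k' : K) :
    stdA i j k * (sB (n := n) k').1 = stdA i j (k * k') := by
  refine Subtype.ext (Matrix.ext fun p q => ?_)
  rw [mul_entry, Finset.sum_eq_single q (fun m _ hm => by
    rw [sB_apply, if_neg hm, mul_zero]) (by simp)]
  rw [sB_apply, if_pos rfl, stdA_apply, stdA_apply]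
  split_ifs <;> simp

theorem sB_mul_stdA (j l : Fin n) (k k' : K) :
    (sB (n := n) k').1 * stdA j l k = stdA j l (k' * k) := by
  refine Subtype.ext (Matrix.ext fun p q => ?_)
  rw [mul_entry, Finset.sum_eq_single p (fun m _ hm => by
    rw [sB_apply, if_neg (fun hc => hm hc.symm), zero_mul]) (by simp)]
  rw [sB_apply, if_pos rfl, stdA_apply, stdA_apply]
  split_ifs <;> simp

theorem diag_mul_entry (b : ↥(diagonalSubring n K)) (x : ↥(lowerTriangularRing n K))
    (p q : Fin n) : ((b : ↥(lowerTriangularRing n K)) * x).1 p q = (b.1).1 p p * x.1 p q := by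
  rw [mul_entry, Finset.sum_eq_single p (fun m _ hm => by
    rw [mem_diag b.2 p m (fun hc => hm hc.symm), zero_mul]) (by simp)]

theorem mul_diag_entry (b : ↥(diagonalSubring n K)) (x : ↥(lowerTriangularRing n K))
    (p q : Fin n) : (x * (b : ↥(lowerTriangularRing n K))).1 p q = x.1 p q * (b.1).1 q q := by
  rw [mul_entry, Finset.sum_eq_single q (fun m _ hm => by
    rw [mem_diag b.2 m q hm, mul_zero]) (by simp)]

theorem diag_mul_stdA (b : ↥(diagonalSubring n K)) (i j : Fin n) (k : K) :
    (b : ↥(lowerTriangularRing n K)) * stdA i j k = stdA i j ((b.1).1 i i * k) := by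
  refine Subtype.ext (Matrix.ext fun p q => ?_)
  rw [diag_mul_entry, stdA_apply, stdA_apply]
  split_ifs with h1
  · rw [h1.1]
  · rw [mul_zero]

theorem stdA_mul_diag (b : ↥(diagonalSubring n K)) (i j : Fin n) (k : K) :
    stdA i j k * (b : ↥(lowerTriangularRing n K)) = stdA i j (k * (b.1).1 j j) := by
  refine Subtype.ext (Matrix.ext fun p q => ?_)
  rw [mul_diag_entry, stdA_apply, stdA_apply]
  split_ifs with h1
  · rw [h1.2.1]
  · rw [zero_mul]

theorem diag_comm_dA (b : ↥(diagonalSubring n K)) (j : Fin n) :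
    (b : ↥(lowerTriangularRing n K)) * dA j = dA j * (b : ↥(lowerTriangularRing n K)) := by
  rw [dA, diag_mul_stdA, stdA_mul_diag, mul_one, one_mul]

theorem dB_coe (j : Fin n) :
    ((dB j : ↥(diagonalSubring n K)) : ↥(lowerTriangularRing n K)) = dA j := rfl

theorem mulLow_dA_entry (a : ↥(lowerTriangularRing n K)) (j p q : Fin n) :
    (a * dA j).1 p q = if q = j then a.1 p j else 0 := by
  rw [← dB_coe, mul_diag_entry, show ((dB (K:=K) j).1).1 = (dA (K:=K) j).1 from rfl, dA_apply]
  by_cases h : q = j <;> simp [h]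

theorem dA_mulLow_entry (a : ↥(lowerTriangularRing n K)) (j p q : Fin n) :
    (dA j * a).1 p q = if p = j then a.1 j q else 0 := by
  rw [← dB_coe, diag_mul_entry, show ((dB (K:=K) j).1).1 = (dA (K:=K) j).1 from rfl, dA_apply]
  by_cases h : p = j <;> simp [h]

theorem triple_entry (a a' : ↥(lowerTriangularRing n K)) (j i l : Fin n) :
    (a * dA j * a').1 i l = a.1 i j * a'.1 j l := by
  rw [mul_entry, Finset.sum_eq_single j (fun m _ hm => by
    rw [mulLow_dA_entry, if_neg hm, zero_mul]) (by simp)]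
  rw [mulLow_dA_entry, if_pos rfl]

end MatrixToolkit

section Main
set_option maxHeartbeats 1000000
set_option synthInstance.maxHeartbeats 200000
variable {K : Type u} [Field K] {n : ℕ}

/-- `a ⊗ a' ↦ a e_{jj} a'`, the `j`-th evaluation `C_2 → A`. -/
noncomputable def Fmap (j : Fin n) :
    ↥(lowerTriangularRing n K) ⊗[ℤ] ↥(lowerTriangularRing n K) →ₗ[ℤ]
      ↥(lowerTriangularRing n K) :=
  TensorProduct.lift ((LinearMap.mul ℤ ↥(lowerTriangularRing n K)).comp
    (LinearMap.mulRight ℤ (dA j)))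

theorem Fmap_tmul (j : Fin n) (x y : ↥(lowerTriangularRing n K)) :
    Fmap j (x ⊗ₜ y) = x * dA j * y := rfl

theorem Fmap_ker_gen (j : Fin n) (a : ↥(lowerTriangularRing n K))
    (b : ↥(diagonalSubring n K)) (t : ↥(lowerTriangularRing n K)) :
    ((a * ↑b) ⊗ₜ[ℤ] t - a ⊗ₜ[ℤ] ((↑b : ↥(lowerTriangularRing n K)) * t)) ∈
      LinearMap.ker (Fmap (K := K) j) := by
  rw [LinearMap.mem_ker, LinearMap.map_sub, Fmap_tmul, Fmap_tmul, mul_assoc a (↑b) (dA j),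
    diag_comm_dA, ← mul_assoc, mul_assoc, sub_self]

theorem rel_le_ker_Fmap (j : Fin n) :
    rel (diagonalSubring n K) 1 ≤ LinearMap.ker (Fmap (K := K) j) := by
  refine Submodule.span_le.mpr ?_
  rintro x (⟨a, b, t, rfl⟩ | ⟨a, r, hr, rfl⟩)
  · exact SetLike.mem_coe.mpr (Fmap_ker_gen j a b t)
  · rw [show rel (diagonalSubring n K) 0 = ⊥ from rfl, Submodule.mem_bot] at hr
    subst hr
    exact (show a ⊗ₜ[ℤ] (0 : ↥(lowerTriangularRing n K)) ∈ LinearMap.ker (Fmap (K := K) j) by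
      rw [tmul_zero]; exact Submodule.zero_mem _)

/-- `C_2 → C_1` induced by `Fmap`. -/
noncomputable def fC (j : Fin n) :
    (CC (diagonalSubring n K) 2 : Type u) →ₗ[ℤ] (CC (diagonalSubring n K) 1 : Type u) :=
  Submodule.mapQ (rel (diagonalSubring n K) 1) (rel (diagonalSubring n K) 0) (Fmap j)
    (rel_le_ker_Fmap j)

theorem fC_mk (j : Fin n) (x y : ↥(lowerTriangularRing n K)) :
    fC j (mk2 (diagonalSubring n K) (x ⊗ₜ y)) = mk1 (diagonalSubring n K) (x * dA j * y) := rfl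

theorem stdA_zero (i j : Fin n) : stdA i j (0 : K) = 0 := by
  refine Subtype.ext (Matrix.ext fun p q => ?_)
  rw [stdA_apply]
  split_ifs <;> rfl

/-- `c ↦ ∑_{i,l} (c_{il} e_{ij}) ⊗ e_{jl}`, the `j`-th coevaluation `A → C_2`-lift. -/
noncomputable def Gmap (j : Fin n) :
    ↥(lowerTriangularRing n K) →ₗ[ℤ]
      ↥(lowerTriangularRing n K) ⊗[ℤ] ↥(lowerTriangularRing n K) :=
  AddMonoidHom.toIntLinearMap
    { toFun := fun c => ∑ p : Fin n × Fin n, stdA p.1 j (c.1 p.1 p.2) ⊗ₜ[ℤ] stdA j p.2 1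
      map_zero' := by
        refine Finset.sum_eq_zero fun p _ => ?_
        rw [show ((0 : ↥(lowerTriangularRing n K)) : Matrix (Fin n) (Fin n) K) p.1 p.2
          = 0 from rfl, stdA_zero, zero_tmul]
      map_add' := by
        intro x y
        rw [← Finset.sum_add_distrib]
        refine Finset.sum_congr rfl fun p _ => ?_
        rw [show ((x + y : ↥(lowerTriangularRing n K)) : Matrix (Fin n) (Fin n) K) p.1 p.2
          = x.1 p.1 p.2 + y.1 p.1 p.2 from rfl, stdA_add, add_tmul] }

theorem Gmap_apply (j : Fin n) (c : ↥(lowerTriangularRing n K)) :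
    Gmap j c = ∑ p : Fin n × Fin n, stdA p.1 j (c.1 p.1 p.2) ⊗ₜ[ℤ] stdA j p.2 1 := by
  unfold Gmap
  rfl

/-- `C_1 → C_2` induced by `Gmap`. -/
noncomputable def gC (j : Fin n) :
    (CC (diagonalSubring n K) 1 : Type u) →ₗ[ℤ] (CC (diagonalSubring n K) 2 : Type u) :=
  Submodule.mapQ (rel (diagonalSubring n K) 0) (rel (diagonalSubring n K) 1) (Gmap j)
    (by rw [show rel (diagonalSubring n K) 0 = ⊥ from rfl]; exact bot_le)

theorem gC_mk (j : Fin n) (c : ↥(lowerTriangularRing n K)) :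
    gC j (mk1 (diagonalSubring n K) c) = mk2 (diagonalSubring n K) (Gmap j c) := rfl

/-- moving a scalar across the middle tensor. -/
theorem bal_scalar (i j l : Fin n) (k k' : K) :
    mk2 (diagonalSubring n K) (stdA i j (k * k') ⊗ₜ stdA j l 1) =
      mk2 (diagonalSubring n K) (stdA i j k ⊗ₜ stdA j l k') := by
  have h1 : stdA i j (k * k') = stdA i j k * ((sB (n := n) k' : ↥(diagonalSubring n K)) :
      ↥(lowerTriangularRing n K)) := (stdA_mul_sB i j k k').symm
  have h2 : ((sB (n := n) k' : ↥(diagonalSubring n K)) : ↥(lowerTriangularRing n K)) *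
      stdA j l 1 = stdA j l k' := by rw [sB_mul_stdA, mul_one]
  rw [h1, bal _ _ (sB k') _, h2]

theorem isBBHom_fC (j : Fin n) : IsBBHom (diagonalSubring n K) (fC j) := by
  intro b
  constructor
  · intro x
    obtain ⟨z, rfl⟩ := mk2_surjective _ x
    induction z using TensorProduct.induction_on with
    | zero => simp only [map_zero]
    | tmul c t =>
        rw [lB2_mk, fC_mk, fC_mk, lB1_mk]
        simp only [mul_assoc]
    | add y z hy hz => simp only [map_add, hy, hz]
  · intro x
    obtain ⟨z, rfl⟩ := mk2_surjective _ x
    induction z using TensorProduct.induction_on with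
    | zero => simp only [map_zero]
    | tmul c t =>
        rw [rB2_mk, fC_mk, fC_mk, rB1_mk]
        simp only [mul_assoc]
    | add y z hy hz => simp only [map_add, hy, hz]

theorem isBBHom_gC (j : Fin n) : IsBBHom (diagonalSubring n K) (gC j) := by
  intro b
  constructor
  · intro x
    obtain ⟨c, rfl⟩ := mk1_surjective _ x
    rw [lB1_mk, gC_mk, gC_mk, Gmap_apply, Gmap_apply, map_sum, map_sum, map_sum]
    refine Finset.sum_congr rfl fun p _ => ?_
    rw [lB2_mk, show ((↑b * c : ↥(lowerTriangularRing n K)) :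
        Matrix (Fin n) (Fin n) K) p.1 p.2 = (↑b * c : ↥(lowerTriangularRing n K)).1 p.1 p.2
        from rfl, diag_mul_entry, diag_mul_stdA]
  · intro x
    obtain ⟨c, rfl⟩ := mk1_surjective _ x
    rw [rB1_mk, gC_mk, gC_mk, Gmap_apply, Gmap_apply, map_sum, map_sum, map_sum]
    refine Finset.sum_congr rfl fun p _ => ?_
    rw [rB2_mk, stdA_mul_diag, one_mul,
      show ((c * ↑b : ↥(lowerTriangularRing n K)) :
        Matrix (Fin n) (Fin n) K) p.1 p.2 = (c * ↑b : ↥(lowerTriangularRing n K)).1 p.1 p.2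
        from rfl, mul_diag_entry, bal_scalar]

theorem sum_gC_fC :
    ∑ j : Fin n, (gC (K := K) j).comp (fC j) = LinearMap.id := by
  refine eqC2 _ _ _ fun x y => ?_
  rw [LinearMap.id_apply]
  rw [LinearMap.sum_apply]
  have lhs : ∀ j : Fin n, ((gC (K := K) j).comp (fC j)) (mk2 (diagonalSubring n K) (x ⊗ₜ y))
      = ∑ p : Fin n × Fin n,
          mk2 (diagonalSubring n K) (stdA p.1 j (x.1 p.1 j) ⊗ₜ stdA j p.2 (y.1 j p.2)) := by
    intro j
    rw [LinearMap.comp_apply, fC_mk, gC_mk, Gmap_apply, map_sum]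
    refine Finset.sum_congr rfl fun p _ => ?_
    rw [show ((x * dA j * y : ↥(lowerTriangularRing n K)) :
      Matrix (Fin n) (Fin n) K) p.1 p.2 = (x * dA j * y).1 p.1 p.2 from rfl,
      triple_entry, bal_scalar]
  rw [Finset.sum_congr rfl fun j _ => lhs j]
  have rhs : mk2 (diagonalSubring n K) (x ⊗ₜ y) = ∑ j : Fin n,
      mk2 (diagonalSubring n K) ((x * dA j) ⊗ₜ (dA j * y)) := by
    have e1 : (x ⊗ₜ[ℤ] y : _ ⊗[ℤ] ↥(lowerTriangularRing n K)) =
        ∑ j : Fin n, (x * dA j) ⊗ₜ[ℤ] y := by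
      rw [← sum_tmul, ← Finset.mul_sum, sum_dA, mul_one]
    rw [e1, map_sum]
    refine Finset.sum_congr rfl fun j _ => ?_
    have e2 : x * dA j = (x * dA j) * ((dB j : ↥(diagonalSubring n K)) :
        ↥(lowerTriangularRing n K)) := by
      rw [dB_coe, mul_assoc, show dA (K := K) j * dA j = dA j from stdA_mul_dA j j 1]
    conv_lhs => rw [e2]
    rw [bal _ _ (dB j) _, dB_coe]
  rw [rhs]
  refine Finset.sum_congr rfl fun j _ => ?_
  rw [mulLow_dA, dA_mulLow, sum_tmul, map_sum, Fintype.sum_prod_type]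
  refine Finset.sum_congr rfl fun i _ => ?_
  rw [tmul_sum, map_sum]


theorem dividesBB_two_one : DividesBB (diagonalSubring n K) 2 1 :=
  ⟨n, fC, gC, isBBHom_fC, isBBHom_gC, sum_gC_fC⟩

theorem hasDepth_three : HasDepth (diagonalSubring n K) 3 :=
  Or.inl ⟨1, rfl, dividesBB_two_one, dividesBB_one_two _⟩

variable (hn : 1 < n)

/-- the index `0`. -/
def i0 : Fin n := ⟨0, Nat.lt_of_lt_of_le Nat.zero_lt_one (le_of_lt hn)⟩
/-- the index `1`. -/
def i1 : Fin n := ⟨1, hn⟩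

theorem i0_lt_i1 : i0 hn < i1 hn := by simp [i0, i1, Fin.lt_def]

theorem i0_ne_i1 : i0 hn ≠ i1 hn := ne_of_lt (i0_lt_i1 hn)

/-- The balanced functional `a ⊗ a' ↦ a_{22}·a'_{21}`. -/
noncomputable def phi : ↥(lowerTriangularRing n K) ⊗[ℤ] ↥(lowerTriangularRing n K) →ₗ[ℤ] K :=
  liftBil
    { toFun := fun a => AddMonoidHom.mk'
        (fun a' => a.1 (i1 hn) (i1 hn) * a'.1 (i1 hn) (i0 hn))
        (fun y z => by
          show _ * _ = _ * _ + _ * _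
          rw [show ((y + z : ↥(lowerTriangularRing n K)) : Matrix (Fin n) (Fin n) K)
            (i1 hn) (i0 hn) = y.1 (i1 hn) (i0 hn) + z.1 (i1 hn) (i0 hn) from rfl, mul_add])
      map_zero' := by
        refine AddMonoidHom.ext fun y => ?_
        show (0 : Matrix (Fin n) (Fin n) K) (i1 hn) (i1 hn) * _ = 0
        rw [Matrix.zero_apply, zero_mul]
      map_add' := fun a b => AddMonoidHom.ext fun y => by
        show ((a + b : ↥(lowerTriangularRing n K)) : Matrix (Fin n) (Fin n) K) _ _ * _ = _
        rw [show ((a + b : ↥(lowerTriangularRing n K)) : Matrix (Fin n) (Fin n) K)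
          (i1 hn) (i1 hn) = a.1 (i1 hn) (i1 hn) + b.1 (i1 hn) (i1 hn) from rfl, add_mul]
        rfl }

theorem phi_tmul (x y : ↥(lowerTriangularRing n K)) :
    phi hn (x ⊗ₜ y) = x.1 (i1 hn) (i1 hn) * y.1 (i1 hn) (i0 hn) := rfl

theorem phi_ker_gen (a : ↥(lowerTriangularRing n K)) (b : ↥(diagonalSubring n K))
    (t : ↥(lowerTriangularRing n K)) :
    ((a * ↑b) ⊗ₜ[ℤ] t - a ⊗ₜ[ℤ] ((↑b : ↥(lowerTriangularRing n K)) * t)) ∈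
      LinearMap.ker (phi hn) := by
  rw [LinearMap.mem_ker, LinearMap.map_sub, phi_tmul, phi_tmul,
    show ((a * ↑b : ↥(lowerTriangularRing n K)) : Matrix (Fin n) (Fin n) K) (i1 hn) (i1 hn)
      = (a * ↑b : ↥(lowerTriangularRing n K)).1 (i1 hn) (i1 hn) from rfl, mul_diag_entry,
    show (((↑b : ↥(lowerTriangularRing n K)) * t : ↥(lowerTriangularRing n K)) :
      Matrix (Fin n) (Fin n) K) (i1 hn) (i0 hn)
      = ((↑b : ↥(lowerTriangularRing n K)) * t).1 (i1 hn) (i0 hn) from rfl, diag_mul_entry]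
  ring

theorem rel_le_ker_phi :
    rel (diagonalSubring n K) 1 ≤ LinearMap.ker (phi hn) := by
  refine Submodule.span_le.mpr ?_
  rintro x (⟨a, b, t, rfl⟩ | ⟨a, r, hr, rfl⟩)
  · exact SetLike.mem_coe.mpr (phi_ker_gen hn a b t)
  · rw [show rel (diagonalSubring n K) 0 = ⊥ from rfl, Submodule.mem_bot] at hr
    subst hr
    exact (show a ⊗ₜ[ℤ] (0 : ↥(lowerTriangularRing n K)) ∈ LinearMap.ker (phi hn) by
      rw [tmul_zero]; exact Submodule.zero_mem _)

/-- `phi` descends to `C_2`. -/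
noncomputable def phiC : (CC (diagonalSubring n K) 2 : Type u) →ₗ[ℤ] K :=
  Submodule.liftQ (rel (diagonalSubring n K) 1) (phi hn) (rel_le_ker_phi hn)

theorem phiC_mk (x y : ↥(lowerTriangularRing n K)) :
    phiC hn (mk2 (diagonalSubring n K) (x ⊗ₜ y)) =
      x.1 (i1 hn) (i1 hn) * y.1 (i1 hn) (i0 hn) := rfl

theorem phiC_vanish (w : ↥(lowerTriangularRing n K)) (hw : w * dA (i0 hn) = w)
    (y : (CC (diagonalSubring n K) 2 : Type u)) :
    phiC hn (lA (diagonalSubring n K) w 1 y) = 0 := by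
  have : (phiC hn).comp (lA (diagonalSubring n K) w 1) = 0 := by
    refine eqC2 _ _ _ fun x t => ?_
    rw [LinearMap.comp_apply, lA1_mk, phiC_mk, LinearMap.zero_apply]
    have hwx : (w * x).1 (i1 hn) (i1 hn) = 0 := by
      rw [mul_entry, Finset.sum_eq_single (i0 hn) (fun m _ hm => by
        rw [← hw, mulLow_dA_entry, if_neg hm, zero_mul]) (by simp)]
      rw [mem_lower x.2 (i0 hn) (i1 hn) (i0_lt_i1 hn), mul_zero]
    rw [show ((w * x : ↥(lowerTriangularRing n K)) : Matrix (Fin n) (Fin n) K)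
      (i1 hn) (i1 hn) = (w * x).1 (i1 hn) (i1 hn) from rfl, hwx, zero_mul]
  calc phiC hn (lA (diagonalSubring n K) w 1 y)
      = ((phiC hn).comp (lA (diagonalSubring n K) w 1)) y := rfl
    _ = 0 := by rw [this, LinearMap.zero_apply]

/-- The balanced functional `a ⊗ a' ↦ a_{21}·a'_{11}`. -/
noncomputable def psi : ↥(lowerTriangularRing n K) ⊗[ℤ] ↥(lowerTriangularRing n K) →ₗ[ℤ] K :=
  liftBil
    { toFun := fun a => AddMonoidHom.mk'
        (fun a' => a.1 (i1 hn) (i0 hn) * a'.1 (i0 hn) (i0 hn))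
        (fun y z => by
          show _ * _ = _ * _ + _ * _
          rw [show ((y + z : ↥(lowerTriangularRing n K)) : Matrix (Fin n) (Fin n) K)
            (i0 hn) (i0 hn) = y.1 (i0 hn) (i0 hn) + z.1 (i0 hn) (i0 hn) from rfl, mul_add])
      map_zero' := by
        refine AddMonoidHom.ext fun y => ?_
        show (0 : Matrix (Fin n) (Fin n) K) (i1 hn) (i0 hn) * _ = 0
        rw [Matrix.zero_apply, zero_mul]
      map_add' := fun a b => AddMonoidHom.ext fun y => by
        show ((a + b : ↥(lowerTriangularRing n K)) : Matrix (Fin n) (Fin n) K) _ _ * _ = _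
        rw [show ((a + b : ↥(lowerTriangularRing n K)) : Matrix (Fin n) (Fin n) K)
          (i1 hn) (i0 hn) = a.1 (i1 hn) (i0 hn) + b.1 (i1 hn) (i0 hn) from rfl, add_mul]
        rfl }

theorem psi_tmul (x y : ↥(lowerTriangularRing n K)) :
    psi hn (x ⊗ₜ y) = x.1 (i1 hn) (i0 hn) * y.1 (i0 hn) (i0 hn) := rfl

theorem psi_ker_gen (a : ↥(lowerTriangularRing n K)) (b : ↥(diagonalSubring n K))
    (t : ↥(lowerTriangularRing n K)) :
    ((a * ↑b) ⊗ₜ[ℤ] t - a ⊗ₜ[ℤ] ((↑b : ↥(lowerTriangularRing n K)) * t)) ∈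
      LinearMap.ker (psi hn) := by
  rw [LinearMap.mem_ker, LinearMap.map_sub, psi_tmul, psi_tmul,
    show ((a * ↑b : ↥(lowerTriangularRing n K)) : Matrix (Fin n) (Fin n) K) (i1 hn) (i0 hn)
      = (a * ↑b : ↥(lowerTriangularRing n K)).1 (i1 hn) (i0 hn) from rfl, mul_diag_entry,
    show (((↑b : ↥(lowerTriangularRing n K)) * t : ↥(lowerTriangularRing n K)) :
      Matrix (Fin n) (Fin n) K) (i0 hn) (i0 hn)
      = ((↑b : ↥(lowerTriangularRing n K)) * t).1 (i0 hn) (i0 hn) from rfl, diag_mul_entry]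
  ring

theorem rel_le_ker_psi :
    rel (diagonalSubring n K) 1 ≤ LinearMap.ker (psi hn) := by
  refine Submodule.span_le.mpr ?_
  rintro x (⟨a, b, t, rfl⟩ | ⟨a, r, hr, rfl⟩)
  · exact SetLike.mem_coe.mpr (psi_ker_gen hn a b t)
  · rw [show rel (diagonalSubring n K) 0 = ⊥ from rfl, Submodule.mem_bot] at hr
    subst hr
    exact (show a ⊗ₜ[ℤ] (0 : ↥(lowerTriangularRing n K)) ∈ LinearMap.ker (psi hn) by
      rw [tmul_zero]; exact Submodule.zero_mem _)

/-- `psi` descends to `C_2`. -/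
noncomputable def psiC : (CC (diagonalSubring n K) 2 : Type u) →ₗ[ℤ] K :=
  Submodule.liftQ (rel (diagonalSubring n K) 1) (psi hn) (rel_le_ker_psi hn)

theorem psiC_mk (x y : ↥(lowerTriangularRing n K)) :
    psiC hn (mk2 (diagonalSubring n K) (x ⊗ₜ y)) =
      x.1 (i1 hn) (i0 hn) * y.1 (i0 hn) (i0 hn) := rfl

theorem psiC_vanish (w : ↥(lowerTriangularRing n K)) (hw : dA (i1 hn) * w = w)
    (y : (CC (diagonalSubring n K) 2 : Type u)) :
    psiC hn (rA (diagonalSubring n K) w 1 y) = 0 := by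
  have : (psiC hn).comp (rA (diagonalSubring n K) w 1) = 0 := by
    refine eqC2 _ _ _ fun x t => ?_
    rw [LinearMap.comp_apply, rA1_mk, psiC_mk, LinearMap.zero_apply]
    have htw : (t * w).1 (i0 hn) (i0 hn) = 0 := by
      rw [mul_entry, Finset.sum_eq_single (i1 hn) (fun m _ hm => by
        rw [← hw, dA_mulLow_entry, if_neg hm, mul_zero]) (by simp)]
      rw [mem_lower t.2 (i0 hn) (i1 hn) (i0_lt_i1 hn), zero_mul]
    rw [show ((t * w : ↥(lowerTriangularRing n K)) : Matrix (Fin n) (Fin n) K)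
      (i0 hn) (i0 hn) = (t * w).1 (i0 hn) (i0 hn) from rfl, htw, mul_zero]
  calc psiC hn (rA (diagonalSubring n K) w 1 y)
      = ((psiC hn).comp (rA (diagonalSubring n K) w 1)) y := rfl
    _ = 0 := by rw [this, LinearMap.zero_apply]


include hn

theorem not_dividesBB_one_zero : ¬ DividesBB (diagonalSubring n K) 1 0 := by
  rintro ⟨r, f, g, hf, hg, hsum⟩
  have key : ∀ d : ↥(diagonalSubring n K), dB (i1 hn) * (d * dB (i0 hn)) = 0 := by
    intro d
    refine Subtype.ext (Subtype.ext (Matrix.ext fun p q => ?_))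
    show (dA (i1 hn) * ((d : ↥(lowerTriangularRing n K)) * dA (i0 hn))).1 p q
      = (0 : Matrix (Fin n) (Fin n) K) p q
    rw [dA_mulLow_entry, mulLow_dA_entry, Matrix.zero_apply,
      mem_diag d.2 (i1 hn) (i0 hn) (i0_ne_i1 hn).symm]
    split_ifs <;> rfl
  have hx0l : lB (diagonalSubring n K) (dB (i1 hn)) 1
      (mk1 (diagonalSubring n K) (stdA (i1 hn) (i0 hn) 1)) =
      mk1 (diagonalSubring n K) (stdA (i1 hn) (i0 hn) 1) := by
    rw [lB1_mk, dB_coe, dA_mul_stdA]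
  have hx0r : rB (diagonalSubring n K) (dB (i0 hn)) 1
      (mk1 (diagonalSubring n K) (stdA (i1 hn) (i0 hn) 1)) =
      mk1 (diagonalSubring n K) (stdA (i1 hn) (i0 hn) 1) := by
    rw [rB1_mk, dB_coe, stdA_mul_dA]
  have hz : ∀ i, f i (mk1 (diagonalSubring n K) (stdA (i1 hn) (i0 hn) 1)) = 0 := by
    intro i
    obtain ⟨d, hd⟩ : ∃ d : ↥(diagonalSubring n K),
        f i (mk1 (diagonalSubring n K) (stdA (i1 hn) (i0 hn) 1)) = d :=
      ⟨f i (mk1 (diagonalSubring n K) (stdA (i1 hn) (i0 hn) 1)), rfl⟩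
    have h1 := (hf i (dB (i1 hn))).1 (mk1 (diagonalSubring n K) (stdA (i1 hn) (i0 hn) 1))
    rw [hx0l, hd] at h1
    have h2 := (hf i (dB (i0 hn))).2 (mk1 (diagonalSubring n K) (stdA (i1 hn) (i0 hn) 1))
    rw [hx0r, hd] at h2
    have h1' : d = dB (i1 hn) * d := h1
    have h2' : d = d * dB (i0 hn) := h2
    rw [hd]
    calc d = dB (i1 hn) * d := h1'
      _ = dB (i1 hn) * (d * dB (i0 hn)) := by rw [← h2']
      _ = 0 := key _
  have hx := LinearMap.ext_iff.mp hsum (mk1 (diagonalSubring n K) (stdA (i1 hn) (i0 hn) 1))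
  rw [LinearMap.sum_apply, LinearMap.id_apply] at hx
  have hx' : mk1 (diagonalSubring n K) (stdA (i1 hn) (i0 hn) 1) =
      mk1 (diagonalSubring n K) 0 := by
    rw [← hx, map_zero]
    exact Finset.sum_eq_zero fun i _ => by rw [LinearMap.comp_apply, hz i, map_zero]
  have heq : (stdA (i1 hn) (i0 hn) (1:K)).1 (i1 hn) (i0 hn) =
      ((0 : ↥(lowerTriangularRing n K))).1 (i1 hn) (i0 hn) :=
    congrArg (fun z => z.1 (i1 hn) (i0 hn)) (mk1_injective _ hx')
  rw [stdA_apply, if_pos ⟨rfl, rfl, le_of_lt (i0_lt_i1 hn)⟩] at heq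
  exact one_ne_zero (heq.trans rfl)

theorem not_dividesAB_one_zero : ¬ DividesAB (diagonalSubring n K) 1 0 := by
  rintro ⟨r, f, g, hf, hg, hsum⟩
  have hX0 : rB (diagonalSubring n K) (dB (i0 hn)) 2
      (mk2 (diagonalSubring n K) (dA (i1 hn) ⊗ₜ stdA (i1 hn) (i0 hn) 1)) =
      mk2 (diagonalSubring n K) (dA (i1 hn) ⊗ₜ stdA (i1 hn) (i0 hn) 1) := by
    rw [rB2_mk, dB_coe, stdA_mul_dA]
  have hvan : ∀ i, phiC hn (g i (f i
      (mk2 (diagonalSubring n K) (dA (i1 hn) ⊗ₜ stdA (i1 hn) (i0 hn) 1)))) = 0 := by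
    intro i
    have h1 : rB (diagonalSubring n K) (dB (i0 hn)) 1
        (f i (mk2 (diagonalSubring n K) (dA (i1 hn) ⊗ₜ stdA (i1 hn) (i0 hn) 1))) =
        f i (mk2 (diagonalSubring n K) (dA (i1 hn) ⊗ₜ stdA (i1 hn) (i0 hn) 1)) := by
      rw [← (hf i).2 (dB (i0 hn)), hX0]
    obtain ⟨w, hw⟩ := mk1_surjective _ (f i
      (mk2 (diagonalSubring n K) (dA (i1 hn) ⊗ₜ stdA (i1 hn) (i0 hn) 1)))
    rw [← hw, rB1_mk, dB_coe] at h1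
    have hww : w * dA (i0 hn) = w := mk1_injective _ h1
    have e : mk1 (diagonalSubring n K) w =
        lA (diagonalSubring n K) w 0 (mk1 (diagonalSubring n K) (dA (i0 hn))) := by
      rw [lA0_mk, hww]
    rw [← hw, e, (hg i).1 w _]
    exact phiC_vanish hn w hww _
  have hx := LinearMap.ext_iff.mp hsum
    (mk2 (diagonalSubring n K) (dA (i1 hn) ⊗ₜ stdA (i1 hn) (i0 hn) 1))
  rw [LinearMap.sum_apply, LinearMap.id_apply] at hx
  have h1 : phiC hn (mk2 (diagonalSubring n K)
      (dA (i1 hn) ⊗ₜ stdA (i1 hn) (i0 hn) 1)) = 1 := by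
    rw [phiC_mk, dA_apply, if_pos ⟨rfl, rfl⟩, stdA_apply,
      if_pos ⟨rfl, rfl, le_of_lt (i0_lt_i1 hn)⟩, mul_one]
  have hsz : ∑ i, phiC hn (((g i).comp (f i)) (mk2 (diagonalSubring n K)
      (dA (i1 hn) ⊗ₜ stdA (i1 hn) (i0 hn) 1))) = 0 :=
    Finset.sum_eq_zero fun i _ => by rw [LinearMap.comp_apply]; exact hvan i
  have : (1 : K) = 0 := by rw [← h1, ← hx, map_sum, hsz]
  exact one_ne_zero this

theorem not_dividesBA_one_zero : ¬ DividesBA (diagonalSubring n K) 1 0 := by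
  rintro ⟨r, f, g, hf, hg, hsum⟩
  have hX0 : lB (diagonalSubring n K) (dB (i1 hn)) 2
      (mk2 (diagonalSubring n K) (stdA (i1 hn) (i0 hn) 1 ⊗ₜ dA (i0 hn))) =
      mk2 (diagonalSubring n K) (stdA (i1 hn) (i0 hn) 1 ⊗ₜ dA (i0 hn)) := by
    rw [lB2_mk, dB_coe, dA_mul_stdA]
  have hvan : ∀ i, psiC hn (g i (f i
      (mk2 (diagonalSubring n K) (stdA (i1 hn) (i0 hn) 1 ⊗ₜ dA (i0 hn))))) = 0 := by
    intro i
    have h1 : lB (diagonalSubring n K) (dB (i1 hn)) 1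
        (f i (mk2 (diagonalSubring n K) (stdA (i1 hn) (i0 hn) 1 ⊗ₜ dA (i0 hn)))) =
        f i (mk2 (diagonalSubring n K) (stdA (i1 hn) (i0 hn) 1 ⊗ₜ dA (i0 hn))) := by
      rw [← (hf i).1 (dB (i1 hn)), hX0]
    obtain ⟨w, hw⟩ := mk1_surjective _ (f i
      (mk2 (diagonalSubring n K) (stdA (i1 hn) (i0 hn) 1 ⊗ₜ dA (i0 hn))))
    rw [← hw, lB1_mk, dB_coe] at h1
    have hww : dA (i1 hn) * w = w := mk1_injective _ h1
    have e : mk1 (diagonalSubring n K) w =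
        rA (diagonalSubring n K) w 0 (mk1 (diagonalSubring n K) (dA (i1 hn))) := by
      rw [rA0_mk, hww]
    rw [← hw, e, (hg i).2 w _]
    exact psiC_vanish hn w hww _
  have hx := LinearMap.ext_iff.mp hsum
    (mk2 (diagonalSubring n K) (stdA (i1 hn) (i0 hn) 1 ⊗ₜ dA (i0 hn)))
  rw [LinearMap.sum_apply, LinearMap.id_apply] at hx
  have h1 : psiC hn (mk2 (diagonalSubring n K)
      (stdA (i1 hn) (i0 hn) 1 ⊗ₜ dA (i0 hn))) = 1 := by
    rw [psiC_mk, dA_apply, if_pos ⟨rfl, rfl⟩, stdA_apply,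
      if_pos ⟨rfl, rfl, le_of_lt (i0_lt_i1 hn)⟩, one_mul]
  have hsz : ∑ i, psiC hn (((g i).comp (f i)) (mk2 (diagonalSubring n K)
      (stdA (i1 hn) (i0 hn) 1 ⊗ₜ dA (i0 hn)))) = 0 :=
    Finset.sum_eq_zero fun i _ => by rw [LinearMap.comp_apply]; exact hvan i
  have : (1 : K) = 0 := by rw [← h1, ← hx, map_sum, hsz]
  exact one_ne_zero this

end Main

/-- For `n > 1`, the diagonal subalgebra `D_n(K)` of the lower
triangular matrix algebra `T_n(K)` has minimum depth `d(D_n(K), T_n(K)) = 3`. -/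
theorem depth_diagonal_in_triangular (K : Type u) [Field K] (n : ℕ) (hn : 1 < n) :
    depth (diagonalSubring n K) = (3 : ℕ∞) := by
  have h3 : HasDepth (diagonalSubring n K) 3 :=
    Or.inl ⟨1, by norm_num, dividesBB_two_one, dividesBB_one_two _⟩
  refine le_antisymm ?_ ?_
  · exact sInf_le ⟨3, h3, by norm_cast⟩
  · refine le_sInf ?_
    rintro d ⟨m, hm, rfl⟩
    have h3m : 3 ≤ m := by
      rcases hm with ⟨k, rfl, h⟩ | ⟨k, rfl, h⟩
      · rcases k with _ | k
        · exact absurd h.1 (not_dividesBB_one_zero hn)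
        · omega
      · rcases k with _ | k
        · rcases h with h | h
          · exact absurd h.1 (not_dividesAB_one_zero hn)
          · exact absurd h.1 (not_dividesBA_one_zero hn)
        · omega
    exact_mod_cast h3m
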